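/- Let A and B be nonempty finite types, each with a distinguished element 0, and write e₀ for the standard basis vector of ℂ^{A×B} at index (0,0). Let U and V be unitary matrices on ℂ^{A×B} such that V·e₀ = ψ ⊗ ψ' for some unit vectors ψ ∈ ℂ^A and ψ' ∈ ℂ^B. Let |ρ⟩ = U·e₀ and let ρ_A be the reduced density matrix of |ρ⟩ on A. Let SWAP_{BB'} be the permutation unitary on ℂ^{(A×B)×(A×B)} sending the basis vector at index ((a,b),(a',b')) to the basis vector at index ((a,b'),(a',b)), and set W = (V† ⊗ I_{A×B}) · SWAP_{BB'} · (U ⊗ V). Then ∑_{(a',b') ∈ A×B} |(W (e₀ ⊗ e₀)) ((0,0),(a',b'))|² = ψ† ρ_A ψ, i.e., the squared norm of the projection of W(e₀⊗e₀) onto basis states whose first A×B component is (0,0) equals ⟨ψ|ρ_A|ψ⟩, the squared fidelity F(ρ_A, ψ)². -/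

import Mathlib

open Matrix Kronecker Finset

noncomputable section

/-- Kronecker (tensor) product of two vectors. -/
def vecKron {I J : Type*} (x : I → ℂ) (y : J → ℂ) : I × J → ℂ := fun p => x p.1 * y p.2

/-- Reduced density matrix on `A` of a vector `v ∈ ℂ^{A×B}`. -/
def reducedA {A B : Type*} [Fintype B] (v : A × B → ℂ) : Matrix A A ℂ :=
  Matrix.of fun i i' => ∑ j, v (i, j) * star (v (i', j))

/-- The permutation unitary `SWAP_{BB'}` on `ℂ^{(A×B)×(A×B)}`, sending the basis vector at
index `((a,b),(a',b'))` to the basis vector at index `((a,b'),(a',b))`. -/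
def swapBB (A B : Type*) [DecidableEq A] [DecidableEq B] :
    Matrix ((A × B) × (A × B)) ((A × B) × (A × B)) ℂ :=
  Matrix.of fun i j => if i = ((j.1.1, j.2.2), (j.2.1, j.1.2)) then 1 else 0

lemma kron_mulVec {A B C D : Type*} [Fintype B] [Fintype D]
    (M : Matrix A B ℂ) (N : Matrix C D ℂ) (x : B → ℂ) (y : D → ℂ) :
    (M ⊗ₖ N) *ᵥ vecKron x y = vecKron (M *ᵥ x) (N *ᵥ y) := by
  funext p
  simp only [Matrix.mulVec, vecKron, dotProduct, kroneckerMap_apply, Fintype.sum_prod_type]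
  rw [Finset.sum_mul_sum]
  simp only [Finset.sum_sigma']
  apply Finset.sum_congr rfl
  intros; ring

lemma swap_mulVec {A B : Type*} [Fintype A] [Fintype B] [DecidableEq A] [DecidableEq B]
    (w : (A × B) × (A × B) → ℂ) (p : (A × B) × (A × B)) :
    (swapBB A B *ᵥ w) p = w ((p.1.1, p.2.2), (p.2.1, p.1.2)) := by
  simp only [Matrix.mulVec, swapBB, dotProduct, Matrix.of_apply]
  rw [Finset.sum_eq_single ((p.1.1, p.2.2), (p.2.1, p.1.2))]
  · simp
  · intro j _ hj
    rw [if_neg, zero_mul]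
    intro h
    apply hj
    obtain ⟨⟨a,b⟩,⟨c,d⟩⟩ := j
    simp_all [Prod.ext_iff]
  · simp

lemma normsq_cast (z : ℂ) : ((‖z‖^2 : ℝ) : ℂ) = z * (starRingEnd ℂ) z := by
  rw [Complex.mul_conj]; norm_cast; simp [Complex.normSq_eq_norm_sq]

theorem stmt0 {A B : Type*} [Fintype A] [Fintype B] [DecidableEq A] [DecidableEq B]
    [Zero A] [Zero B]
    (U V : Matrix (A × B) (A × B) ℂ)
    (hU : U ∈ Matrix.unitaryGroup (A × B) ℂ) (hV : V ∈ Matrix.unitaryGroup (A × B) ℂ)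
    (ψ : A → ℂ) (ψ' : B → ℂ)
    (hψ : ∑ a, ‖ψ a‖ ^ 2 = 1) (hψ' : ∑ b, ‖ψ' b‖ ^ 2 = 1)
    (e0 : A × B → ℂ) (he0 : e0 = fun p => if p = ((0 : A), (0 : B)) then 1 else 0)
    (hVe0 : V *ᵥ e0 = vecKron ψ ψ')
    (W : Matrix ((A × B) × (A × B)) ((A × B) × (A × B)) ℂ)
    (hW : W = (Vᴴ ⊗ₖ (1 : Matrix (A × B) (A × B) ℂ)) * swapBB A B * (U ⊗ₖ V)) :
    ((∑ p : A × B, ‖(W *ᵥ vecKron e0 e0) ((((0 : A), (0 : B))), p)‖ ^ 2 : ℝ) : ℂ)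
      = star ψ ⬝ᵥ (reducedA (U *ᵥ e0) *ᵥ ψ) := by
  set r : A × B → ℂ := U *ᵥ e0 with hr
  set s : B → ℂ := fun b => ∑ c, (starRingEnd ℂ) (ψ c) * r (c, b) with hs
  -- entries of the 0-column of V
  have hV00 : ∀ p : A × B, V p ((0 : A), (0 : B)) = ψ p.1 * ψ' p.2 := by
    intro p
    have := congrFun hVe0 p
    simpa [Matrix.mulVec, dotProduct, he0, vecKron, mul_ite] using this
  -- sum of |ψ'|² as complex
  have hψ'C : (∑ d, (starRingEnd ℂ) (ψ' d) * ψ' d) = 1 := by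
    have : (∑ d, (starRingEnd ℂ) (ψ' d) * ψ' d) = ((∑ b, ‖ψ' b‖ ^ 2 : ℝ) : ℂ) := by
      push_cast
      exact Finset.sum_congr rfl fun d _ => by
        rw [mul_comm]
        have := normsq_cast (ψ' d); push_cast at this; rw [← this]
    rw [this, hψ']; norm_num
  have hswap : swapBB A B *ᵥ vecKron r (vecKron ψ ψ')
      = fun p : (A × B) × (A × B) => r (p.1.1, p.2.2) * (ψ p.2.1 * ψ' p.1.2) := by
    funext p; rw [_root_.swap_mulVec]; rfl
  have hz : ∀ q : A × B, (W *ᵥ vecKron e0 e0) (((0 : A), (0 : B)), q) = ψ q.1 * s q.2 := by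
    intro q
    rw [hW, ← Matrix.mulVec_mulVec, ← Matrix.mulVec_mulVec, kron_mulVec, hVe0, ← hr, hswap]
    simp only [Matrix.mulVec, dotProduct, kroneckerMap_apply, Matrix.one_apply,
      Matrix.conjTranspose_apply, Fintype.sum_prod_type, mul_ite, ite_mul, mul_one, mul_zero,
      zero_mul, one_mul, Finset.sum_ite_eq, Finset.mem_univ, if_true, hV00]
    simp only [hs, Finset.mul_sum]
    refine Finset.sum_congr rfl fun c _ => ?_
    calc ∑ d, star (ψ c * ψ' d) * (r (c, q.2) * (ψ q.1 * ψ' d))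
        = (∑ d, (starRingEnd ℂ) (ψ' d) * ψ' d) * (ψ q.1 * ((starRingEnd ℂ) (ψ c) * r (c, q.2))) := by
          rw [Finset.sum_mul]
          exact Finset.sum_congr rfl fun d _ => by simp only [Complex.star_def, RingHom.map_mul]; ring
      _ = ψ q.1 * ((starRingEnd ℂ) (ψ c) * r (c, q.2)) := by rw [hψ'C, one_mul]
  have hψC : (∑ a, ψ a * (starRingEnd ℂ) (ψ a)) = 1 := by
    rw [show (∑ a, ψ a * (starRingEnd ℂ) (ψ a)) = ((∑ a, ‖ψ a‖ ^ 2 : ℝ) : ℂ) from by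
      push_cast; exact Finset.sum_congr rfl fun a _ => by
        have := normsq_cast (ψ a); push_cast at this; rw [← this], hψ]
    norm_num
  have hnc : ∀ z : ℂ, ((‖z‖ : ℝ) : ℂ) ^ 2 = z * (starRingEnd ℂ) z := by
    intro z; have := normsq_cast z; push_cast at this; exact this
  have hL : ((∑ p : A × B, ‖(W *ᵥ vecKron e0 e0) ((((0 : A), (0 : B))), p)‖ ^ 2 : ℝ) : ℂ)
      = ∑ b, s b * (starRingEnd ℂ) (s b) := by
    push_cast
    simp only [hz, hnc]
    rw [Fintype.sum_prod_type]
    calc ∑ a, ∑ b, (ψ a * s b) * (starRingEnd ℂ) (ψ a * s b)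
        = (∑ a, ψ a * (starRingEnd ℂ) (ψ a)) * (∑ b, s b * (starRingEnd ℂ) (s b)) := by
          rw [Finset.sum_mul_sum]
          exact Finset.sum_congr rfl fun a _ => Finset.sum_congr rfl fun b _ => by
            rw [RingHom.map_mul]; ring
      _ = ∑ b, s b * (starRingEnd ℂ) (s b) := by rw [hψC, one_mul]
  rw [hL]
  simp only [dotProduct, reducedA, Matrix.mulVec, Matrix.of_apply, Pi.star_apply, hs,
    map_sum, RingHom.map_mul, Complex.conj_conj, Finset.mul_sum, Finset.sum_mul,
    Complex.star_def]
  conv_lhs => rw [Finset.sum_comm]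
  refine Eq.trans (Finset.sum_congr rfl fun x1 _ => Finset.sum_comm) ?_
  conv_lhs => rw [Finset.sum_comm]
  exact Finset.sum_congr rfl fun i _ => Finset.sum_congr rfl fun x1 _ =>
    Finset.sum_congr rfl fun b _ => by ring

end
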